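/- Convolution theorem for the cosine-type transform: for f, g ∈ L¹(ℝ), C(f # g)(t) = C(f)(t) · C(g)(t) for all t ∈ ℝ, where C(h)(t) = ∫_ℝ h(x) cos(xt) dx. -/

import Mathlib

open MeasureTheory Real Filter Topology

noncomputable def hash (f g : ℝ → ℝ) : ℝ → ℝ :=
  fun x => (1/2) * ∫ y, (f (x + y) + f (x - y)) * g y

noncomputable def hartley (f : ℝ → ℝ) : ℝ → ℝ :=
  fun t => (1 / Real.sqrt (2 * Real.pi)) * ∫ x, f x * (Real.cos (x * t) + Real.sin (x * t))

noncomputable def cosT (f : ℝ → ℝ) : ℝ → ℝ :=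
  fun t => ∫ x, f x * Real.cos (x * t)

noncomputable def fourierT (f : ℝ → ℝ) : ℝ → ℂ :=
  fun t => (1 / Real.sqrt (2 * Real.pi) : ℂ) * ∫ x, (f x : ℂ) * Complex.exp (-Complex.I * x * t)

/-- The shear `(x, y) ↦ (x + y, y)` as a measurable equivalence of `ℝ × ℝ`. -/
noncomputable def shearE : (ℝ × ℝ) ≃ᵐ (ℝ × ℝ) where
  toFun p := (p.1 + p.2, p.2)
  invFun p := (p.1 - p.2, p.2)
  left_inv p := by simp
  right_inv p := by simp
  measurable_toFun := (measurable_fst.add measurable_snd).prodMk measurable_snd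
  measurable_invFun := (measurable_fst.sub measurable_snd).prodMk measurable_snd

theorem stmt15 (f g : ℝ → ℝ) (hf : Integrable f) (hg : Integrable g) :
    ∀ t : ℝ, cosT (hash f g) t = cosT f t * cosT g t := by
  intro t
  have hcosb : ∀ u : ℝ, ‖Real.cos u‖ ≤ 1 := fun u => by
    rw [Real.norm_eq_abs]; exact Real.abs_cos_le_one u
  have hmc : AEStronglyMeasurable (fun x : ℝ => Real.cos (x * t)) volume :=
    (Real.continuous_cos.comp (continuous_id.mul continuous_const)).aestronglyMeasurable
  -- integrability of the double-integral integrand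
  have base : Integrable (fun p : ℝ × ℝ => f p.1 * g p.2) (volume.prod volume) :=
    hf.mul_prod hg
  have hF1 : Integrable (fun p : ℝ × ℝ => f (p.1 + p.2) * g p.2) (volume.prod volume) :=
    ((measurePreserving_add_prod (volume : Measure ℝ) volume).integrable_comp_emb
      shearE.measurableEmbedding).mpr base
  have hF2 : Integrable (fun p : ℝ × ℝ => f (p.1 - p.2) * g p.2) (volume.prod volume) :=
    ((measurePreserving_sub_prod (volume : Measure ℝ) volume).integrable_comp_emb
      shearE.symm.measurableEmbedding).mpr base
  have hFs : Integrable (fun p : ℝ × ℝ => (f (p.1 + p.2) + f (p.1 - p.2)) * g p.2)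
      (volume.prod volume) := by
    have := hF1.add hF2
    exact this.congr (ae_of_all _ fun p => by simp [add_mul])
  have hF : Integrable
      (Function.uncurry fun x y : ℝ =>
        Real.cos (x * t) * ((f (x + y) + f (x - y)) * g y)) (volume.prod volume) := by
    refine hFs.bdd_mul ?_ (ae_of_all _ fun p => hcosb _)
    exact (Real.continuous_cos.comp (continuous_fst.mul continuous_const)).aestronglyMeasurable
  -- rewrite the outer integral
  have step1 : cosT (hash f g) t
      = (1/2 : ℝ) * ∫ x, ∫ y, Real.cos (x * t) * ((f (x + y) + f (x - y)) * g y) := by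
    unfold cosT _root_.hash
    rw [← integral_const_mul]
    congr 1; funext x
    rw [integral_const_mul (μ := volume) (Real.cos (x * t))
      (fun y => (f (x + y) + f (x - y)) * g y)]
    ring
  rw [step1]
  rw [show (∫ x, ∫ y, Real.cos (x * t) * ((f (x + y) + f (x - y)) * g y))
      = ∫ y, ∫ x, Real.cos (x * t) * ((f (x + y) + f (x - y)) * g y) from
    integral_integral_swap hF]
  -- compute the inner integral for each y
  have inner : ∀ y : ℝ, (∫ x, Real.cos (x * t) * ((f (x + y) + f (x - y)) * g y))
      = (2 * Real.cos (y * t)) * cosT f t * g y := by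
    intro y
    have h1 : Integrable (fun x => Real.cos (x * t) * f (x + y)) :=
      (hf.comp_add_right y).bdd_mul hmc (ae_of_all _ fun x => hcosb _)
    have h2 : Integrable (fun x => Real.cos (x * t) * f (x - y)) :=
      (hf.comp_sub_right y).bdd_mul hmc (ae_of_all _ fun x => hcosb _)
    have ha : Integrable (fun x => Real.cos ((x - y) * t) * f x) := by
      refine hf.bdd_mul ?_ (ae_of_all _ fun x => hcosb _)
      exact (Real.continuous_cos.comp
        ((continuous_id.sub continuous_const).mul continuous_const)).aestronglyMeasurable
    have hb : Integrable (fun x => Real.cos ((x + y) * t) * f x) := by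
      refine hf.bdd_mul ?_ (ae_of_all _ fun x => hcosb _)
      exact (Real.continuous_cos.comp
        ((continuous_id.add continuous_const).mul continuous_const)).aestronglyMeasurable
    have t1 : (∫ x, Real.cos (x * t) * f (x + y)) = ∫ x, Real.cos ((x - y) * t) * f x := by
      have := integral_add_right_eq_self (μ := volume) (fun x => Real.cos ((x - y) * t) * f x) y
      simpa using this
    have t2 : (∫ x, Real.cos (x * t) * f (x - y)) = ∫ x, Real.cos ((x + y) * t) * f x := by
      have := integral_sub_right_eq_self (μ := volume) (fun x => Real.cos ((x + y) * t) * f x) y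
      simpa using this
    calc (∫ x, Real.cos (x * t) * ((f (x + y) + f (x - y)) * g y))
        = (∫ x, (Real.cos (x * t) * f (x + y) + Real.cos (x * t) * f (x - y))) * g y := by
          rw [← integral_mul_const]; congr 1; funext x; ring
      _ = ((∫ x, Real.cos (x * t) * f (x + y)) + ∫ x, Real.cos (x * t) * f (x - y)) * g y := by
          rw [integral_add h1 h2]
      _ = ((∫ x, Real.cos ((x - y) * t) * f x) + ∫ x, Real.cos ((x + y) * t) * f x) * g y := by
          rw [t1, t2]
      _ = (∫ x, (Real.cos ((x - y) * t) * f x + Real.cos ((x + y) * t) * f x)) * g y := by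
          rw [integral_add ha hb]
      _ = (∫ x, (2 * Real.cos (y * t)) * (f x * Real.cos (x * t))) * g y := by
          congr 1; apply integral_congr_ae; filter_upwards with x
          rw [sub_mul, add_mul, Real.cos_sub, Real.cos_add, mul_comm x t, mul_comm y t]
          ring
      _ = (2 * Real.cos (y * t)) * cosT f t * g y := by
          rw [integral_const_mul]; unfold cosT; ring
  simp_rw [inner]
  -- compute the outer integral
  have : (∫ y, (2 * Real.cos (y * t)) * cosT f t * g y)
      = (2 * cosT f t) * ∫ y, g y * Real.cos (y * t) := by
    rw [← integral_const_mul]; congr 1; funext y; ring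
  rw [this]
  unfold cosT
  ring
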